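/- Let m ≥ 1 and let X₁, X₂, X₃, X₄ be i.i.d. random variables uniform on {0, 1, ..., m}. Then the probability that X₁ + X₃ = X₂ + X₄ equals (2m² + 4m + 3)/(3(m+1)³). -/
import Mathlib

open Finset in
private lemma sc_gauss (n : ℕ) : 2 * ∑ i ∈ range n, (i+1) = n * (n+1) := by
  induction n with
  | zero => simp
  | succ k ih =>
    rw [Finset.sum_range_succ, Nat.mul_add, ih]; ring

open Finset in
private lemma sc_reflsum (n : ℕ) : ∑ i ∈ range n, (n - i) = ∑ i ∈ range n, (i+1) := by
  rw [← Finset.sum_range_reflect]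
  apply Finset.sum_congr rfl
  intro i hi
  simp only [Finset.mem_range] at hi
  omega

open Finset in
private lemma sc_lemA (n : ℕ) :
    3 * ∑ a ∈ range n, ∑ b ∈ range n, (max a b - min a b) = n^3 - n := by
  induction n with
  | zero => simp
  | succ k ih =>
    rw [Finset.sum_range_succ]
    simp only [Finset.sum_range_succ]
    rw [Finset.sum_add_distrib]
    have h2 : ∑ a ∈ range k, (max a k - min a k) = ∑ a ∈ range k, (k - a) := by
      apply Finset.sum_congr rfl
      intro x hx
      simp only [Finset.mem_range] at hx
      rw [max_eq_right hx.le, min_eq_left hx.le]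
    have h3 : ∑ b ∈ range k, (max k b - min k b) = ∑ b ∈ range k, (k - b) := by
      apply Finset.sum_congr rfl
      intro b hb
      simp only [Finset.mem_range] at hb
      rw [max_eq_left hb.le, min_eq_right hb.le]
    rw [h2, h3, sc_reflsum]
    simp only [max_self, min_self, Nat.sub_self, add_zero]
    have hg : 2 * ∑ i ∈ range k, (i+1) = k * k + k := by
      rw [sc_gauss]; ring
    set S := ∑ a ∈ range k, ∑ b ∈ range k, (max a b - min a b) with hS
    set G := ∑ i ∈ range k, (i+1) with hG
    have hcube : (k+1)^3 = k^3 + 3*(k*k) + 3*k + 1 := by ring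
    have hkk : k ≤ k^3 := Nat.le_self_pow (by norm_num) _
    set K3 := k^3 with hK3
    set K2 := k * k with hK2
    omega

open Finset in
private lemma sc_lemB1 (m e : ℕ) :
    ∑ d ∈ range (m+1), (if e + d ≤ m then (1:ℕ) else 0) = (m+1) - e := by
  rw [← Finset.card_filter]
  have : (range (m+1)).filter (fun d => e + d ≤ m) = range (m+1-e) := by
    ext d; simp only [Finset.mem_filter, Finset.mem_range]; omega
  rw [this, Finset.card_range]

open Finset in
private lemma sc_lemB2 (m a b : ℕ) (hab : a ≤ b) :
    ∑ c ∈ range (m+1), ∑ d ∈ range (m+1), (if a + c = b + d then (1:ℕ) else 0)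
      = (m+1) - (b - a) := by
  rw [Finset.sum_comm]
  have h1 : ∀ d ∈ range (m+1),
      ∑ c ∈ range (m+1), (if a + c = b + d then (1:ℕ) else 0)
        = (if (b - a) + d ≤ m then (1:ℕ) else 0) := by
    intro d hd
    have : ∀ c, (a + c = b + d) ↔ (c = (b - a) + d) := by intro c; omega
    simp only [this]
    rw [Finset.sum_ite_eq' (range (m+1)) ((b-a)+d) (fun _ => (1:ℕ))]
    simp only [Finset.mem_range]
    congr 1
    simp only [eq_iff_iff]
    omega
  rw [Finset.sum_congr rfl h1, sc_lemB1]

open Finset in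
private lemma sc_lemB (m a b : ℕ) (ha : a ≤ m) (hb : b ≤ m) :
    ∑ c ∈ range (m+1), ∑ d ∈ range (m+1), (if a + c = b + d then (1:ℕ) else 0)
      = (m+1) - (max a b - min a b) := by
  rcases le_total a b with h | h
  · rw [sc_lemB2 m a b h, max_eq_right h, min_eq_left h]
  · rw [Finset.sum_comm]
    calc ∑ d ∈ range (m+1), ∑ c ∈ range (m+1), (if a + c = b + d then (1:ℕ) else 0)
        = ∑ d ∈ range (m+1), ∑ c ∈ range (m+1), (if b + d = a + c then (1:ℕ) else 0) := by
          apply Finset.sum_congr rfl; intro d _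
          apply Finset.sum_congr rfl; intro c _
          congr 1; simp only [eq_iff_iff]; omega
      _ = (m+1) - (a - b) := sc_lemB2 m b a h
      _ = (m+1) - (max a b - min a b) := by
          rw [max_eq_left h, min_eq_right h]

open Finset in
private lemma sc_card (m : ℕ) :
    ((Finset.univ : Finset (Fin (m+1) × Fin (m+1) × Fin (m+1) × Fin (m+1))).filter
        (fun x => (x.1 : ℕ) + (x.2.2.1 : ℕ) = (x.2.1 : ℕ) + (x.2.2.2 : ℕ))).card
      = ∑ a ∈ range (m+1), ∑ b ∈ range (m+1),
          ((m+1) - (max a b - min a b)) := by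
  rw [Finset.card_filter]
  rw [show ((Finset.univ : Finset (Fin (m+1) × Fin (m+1) × Fin (m+1) × Fin (m+1)))) =
      Finset.univ ×ˢ Finset.univ ×ˢ Finset.univ ×ˢ Finset.univ from by simp]
  simp only [Finset.sum_product]
  calc ∑ a : Fin (m+1), ∑ b : Fin (m+1), ∑ c : Fin (m+1), ∑ d : Fin (m+1),
        (if (a:ℕ) + (c:ℕ) = (b:ℕ) + (d:ℕ) then (1:ℕ) else 0)
      = ∑ a : Fin (m+1), ∑ b : Fin (m+1), ∑ c : Fin (m+1), ∑ d ∈ range (m+1),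
        (if (a:ℕ) + (c:ℕ) = (b:ℕ) + d then (1:ℕ) else 0) := by
        refine Finset.sum_congr rfl fun a _ => Finset.sum_congr rfl fun b _ =>
          Finset.sum_congr rfl fun c _ => ?_
        exact Fin.sum_univ_eq_sum_range
          (fun d => if (a:ℕ) + (c:ℕ) = (b:ℕ) + d then (1:ℕ) else 0) (m+1)
    _ = ∑ a : Fin (m+1), ∑ b : Fin (m+1), ∑ c ∈ range (m+1), ∑ d ∈ range (m+1),
        (if (a:ℕ) + c = (b:ℕ) + d then (1:ℕ) else 0) := by
        refine Finset.sum_congr rfl fun a _ => Finset.sum_congr rfl fun b _ => ?_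
        exact Fin.sum_univ_eq_sum_range
          (fun c => ∑ d ∈ range (m+1), if (a:ℕ) + c = (b:ℕ) + d then (1:ℕ) else 0) (m+1)
    _ = ∑ a : Fin (m+1), ∑ b ∈ range (m+1), ∑ c ∈ range (m+1), ∑ d ∈ range (m+1),
        (if (a:ℕ) + c = b + d then (1:ℕ) else 0) := by
        refine Finset.sum_congr rfl fun a _ => ?_
        exact Fin.sum_univ_eq_sum_range
          (fun b => ∑ c ∈ range (m+1), ∑ d ∈ range (m+1),
            if (a:ℕ) + c = b + d then (1:ℕ) else 0) (m+1)
    _ = ∑ a ∈ range (m+1), ∑ b ∈ range (m+1), ∑ c ∈ range (m+1), ∑ d ∈ range (m+1),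
        (if a + c = b + d then (1:ℕ) else 0) :=
        Fin.sum_univ_eq_sum_range
          (fun a => ∑ b ∈ range (m+1), ∑ c ∈ range (m+1), ∑ d ∈ range (m+1),
            if a + c = b + d then (1:ℕ) else 0) (m+1)
    _ = ∑ a ∈ range (m+1), ∑ b ∈ range (m+1), ((m+1) - (max a b - min a b)) := by
        refine Finset.sum_congr rfl fun a ha => Finset.sum_congr rfl fun b hb => ?_
        simp only [Finset.mem_range] at ha hb
        exact sc_lemB m a b (by omega) (by omega)

open Finset in
private lemma sc_key (m : ℕ) :
    3 * ((Finset.univ : Finset (Fin (m+1) × Fin (m+1) × Fin (m+1) × Fin (m+1))).filter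
        (fun x => (x.1 : ℕ) + (x.2.2.1 : ℕ) = (x.2.1 : ℕ) + (x.2.2.2 : ℕ))).card
      = 2 * (m+1)^3 + (m+1) := by
  rw [sc_card]
  have hTD : (∑ a ∈ range (m+1), ∑ b ∈ range (m+1), ((m+1) - (max a b - min a b)))
      + (∑ a ∈ range (m+1), ∑ b ∈ range (m+1), (max a b - min a b)) = (m+1)^3 := by
    rw [← Finset.sum_add_distrib]
    have : ∀ a ∈ range (m+1),
        (∑ b ∈ range (m+1), ((m+1) - (max a b - min a b)))
          + (∑ b ∈ range (m+1), (max a b - min a b))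
        = ∑ b ∈ range (m+1), (m+1) := by
      intro a ha
      rw [← Finset.sum_add_distrib]
      refine Finset.sum_congr rfl fun b hb => ?_
      simp only [Finset.mem_range] at ha hb
      omega
    rw [Finset.sum_congr rfl this]
    simp only [Finset.sum_const, Finset.card_range, smul_eq_mul]
    ring
  have hA := sc_lemA (m+1)
  have hle : (m+1) ≤ (m+1)^3 := Nat.le_self_pow (by norm_num) _
  set T := ∑ a ∈ range (m+1), ∑ b ∈ range (m+1), ((m+1) - (max a b - min a b)) with hT
  set D := ∑ a ∈ range (m+1), ∑ b ∈ range (m+1), (max a b - min a b) with hD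
  set N := (m+1)^3 with hN
  omega

theorem stmt7 (m : ℕ) (hm : 1 ≤ m) :
    (((Finset.univ : Finset (Fin (m+1) × Fin (m+1) × Fin (m+1) × Fin (m+1))).filter
        (fun x => (x.1 : ℕ) + (x.2.2.1 : ℕ) = (x.2.1 : ℕ) + (x.2.2.2 : ℕ))).card : ℝ) /
      ((m + 1 : ℝ)) ^ 4 =
    (2 * (m : ℝ) ^ 2 + 4 * m + 3) / (3 * ((m : ℝ) + 1) ^ 3) := by
  have key := sc_key m
  have h3 : (3:ℝ) * (((Finset.univ : Finset (Fin (m+1) × Fin (m+1) × Fin (m+1) × Fin (m+1))).filter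
        (fun x => (x.1 : ℕ) + (x.2.2.1 : ℕ) = (x.2.1 : ℕ) + (x.2.2.2 : ℕ))).card : ℝ)
      = 2 * ((m:ℝ)+1)^3 + ((m:ℝ)+1) := by
    exact_mod_cast congrArg (Nat.cast : ℕ → ℝ) key
  have hpos : ((m:ℝ) + 1) ≠ 0 := by positivity
  field_simp
  nlinarith [h3, sq_nonneg ((m:ℝ)+1)]
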